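/- arXiv:2310.17906 — 2 statements merged into one kernel-verified Lean document; each statement's English description precedes it below -/
import Mathlib

section
/- For partitions λ and μ of n, let λ' and μ' denote their conjugates (transposes). Then ‖λ − μ‖₁ = ‖λ' − μ'‖₁, i.e., the L1 distance between partitions of n is invariant under simultaneous conjugation. -/
/-- A partition of `n`, identified with its weakly decreasing sequence of
nonnegative integers of length `n` (padded with zeros) summing to `n`. -/
def IsPartitionVec (n : ℕ) (l : Fin n → ℕ) : Prop :=
  Antitone l ∧ ∑ i, l i = n

/-- The L1 distance `‖λ − μ‖₁ = Σ_{i=1}^n |λ_i − μ_i|`. -/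
def l1Dist {n : ℕ} (l m : Fin n → ℕ) : ℕ :=
  ∑ i, ((l i : ℤ) - (m i : ℤ)).natAbs

/-- The conjugate (transpose) partition: `λ'_i = #{j : λ_j ≥ i}` (here indexed
from `0`, so the entry at `i : Fin n` is `#{j : λ_j ≥ i + 1}`). -/
def conjVec {n : ℕ} (l : Fin n → ℕ) : Fin n → ℕ :=
  fun i => (Finset.univ.filter (fun j => i.val + 1 ≤ l j)).card

open Finset

lemma cardA (n a b : ℕ) (ha : a ≤ n) (hb : b ≤ n) :
    (Finset.univ.filter (fun j : Fin n => ¬((j.val < a) ↔ (j.val < b)))).card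
      = ((a : ℤ) - (b : ℤ)).natAbs := by
  have key : ∀ a b : ℕ, a ≤ b → b ≤ n →
      (Finset.univ.filter (fun j : Fin n => ¬((j.val < a) ↔ (j.val < b)))).card
        = b - a := by
    intro a b hab hbn
    have h1 : (Finset.univ.filter (fun j : Fin n => ¬((j.val < a) ↔ (j.val < b))))
        = (Finset.univ.filter (fun j : Fin n => a ≤ j.val ∧ j.val < b)) := by
      ext j; simp only [mem_filter, mem_univ, true_and]; omega
    rw [h1, Finset.card_filter,
      Fin.sum_univ_eq_sum_range (fun j => if a ≤ j ∧ j < b then 1 else 0),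
      ← Finset.card_filter]
    have h2 : (Finset.range n).filter (fun j => a ≤ j ∧ j < b) = Finset.Ico a b := by
      ext j; simp [Finset.mem_Ico]; omega
    rw [h2, Nat.card_Ico]
  rcases le_total a b with h | h
  · rw [key a b h hb]; omega
  · have heq : (Finset.univ.filter (fun j : Fin n => ¬((j.val < a) ↔ (j.val < b))))
        = (Finset.univ.filter (fun j : Fin n => ¬((j.val < b) ↔ (j.val < a)))) := by
      ext j; simp only [mem_filter, mem_univ, true_and]; tauto
    rw [heq, key b a h ha]; omega

lemma lt_conj_iff {n : ℕ} {l : Fin n → ℕ} (hl : Antitone l) (i j : Fin n) :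
    i.val < conjVec l j ↔ j.val + 1 ≤ l i := by
  constructor
  · intro h
    by_contra hc
    push_neg at hc
    have hsub : (Finset.univ.filter (fun i' : Fin n => j.val + 1 ≤ l i'))
        ⊆ (Finset.univ.filter (fun i' : Fin n => i'.val < i.val)) := by
      intro i' hi'
      simp only [mem_filter, mem_univ, true_and] at *
      by_contra hc2
      push_neg at hc2
      have : l i' ≤ l i := hl (by exact Fin.le_def.mpr hc2)
      omega
    have hcard := Finset.card_le_card hsub
    have : (Finset.univ.filter (fun i' : Fin n => i'.val < i.val)).card = i.val := by
      rw [Finset.card_filter,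
        Fin.sum_univ_eq_sum_range (fun i' => if i' < i.val then 1 else 0),
        ← Finset.card_filter]
      have : (Finset.range n).filter (fun i' => i' < i.val) = Finset.range i.val := by
        ext x; simp; omega
      rw [this, Finset.card_range]
    unfold conjVec at h
    omega
  · intro h
    have hsub : (Finset.univ.filter (fun i' : Fin n => i'.val ≤ i.val))
        ⊆ (Finset.univ.filter (fun i' : Fin n => j.val + 1 ≤ l i')) := by
      intro i' hi'
      simp only [mem_filter, mem_univ, true_and] at *
      exact le_trans h (hl (Fin.le_def.mpr hi'))
    have hcard := Finset.card_le_card hsub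
    have : (Finset.univ.filter (fun i' : Fin n => i'.val ≤ i.val)).card = i.val + 1 := by
      rw [Finset.card_filter,
        Fin.sum_univ_eq_sum_range (fun i' => if i' ≤ i.val then 1 else 0),
        ← Finset.card_filter]
      have : (Finset.range n).filter (fun i' => i' ≤ i.val) = Finset.range (i.val + 1) := by
        ext x; simp; omega
      rw [this, Finset.card_range]
    unfold conjVec
    omega

/-- For partitions `λ` and `μ` of `n` with conjugates `λ'` and `μ'`, we have
`‖λ − μ‖₁ = ‖λ' − μ'‖₁`: the L1 distance is invariant under simultaneous
conjugation. -/
theorem l1Dist_conj_conj (n : ℕ) (l m : Fin n → ℕ)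
    (hl : IsPartitionVec n l) (hm : IsPartitionVec n m) :
    l1Dist (conjVec l) (conjVec m) = l1Dist l m := by
  obtain ⟨hla, hls⟩ := hl
  obtain ⟨hma, hms⟩ := hm
  have hlle : ∀ i, l i ≤ n := fun i => hls ▸ Finset.single_le_sum (fun _ _ => Nat.zero_le _) (Finset.mem_univ i)
  have hmle : ∀ i, m i ≤ n := fun i => hms ▸ Finset.single_le_sum (fun _ _ => Nat.zero_le _) (Finset.mem_univ i)
  have hcle : ∀ (f : Fin n → ℕ) (j : Fin n), conjVec f j ≤ n := by
    intro f j
    exact le_trans (Finset.card_filter_le _ _) (by simp)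
  unfold l1Dist
  calc ∑ j, ((conjVec l j : ℤ) - (conjVec m j : ℤ)).natAbs
      = ∑ j : Fin n, (Finset.univ.filter (fun i : Fin n =>
          ¬((i.val < conjVec l j) ↔ (i.val < conjVec m j)))).card := by
        refine Finset.sum_congr rfl fun j _ => ?_
        rw [cardA n _ _ (hcle l j) (hcle m j)]
    _ = ∑ j : Fin n, (Finset.univ.filter (fun i : Fin n =>
          ¬((j.val + 1 ≤ l i) ↔ (j.val + 1 ≤ m i)))).card := by
        refine Finset.sum_congr rfl fun j _ => ?_
        congr 1
        ext i
        simp only [Finset.mem_filter, Finset.mem_univ, true_and,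
          lt_conj_iff hla i j, lt_conj_iff hma i j]
    _ = ∑ i : Fin n, (Finset.univ.filter (fun j : Fin n =>
          ¬((j.val < l i) ↔ (j.val < m i)))).card := by
        simp only [Finset.card_filter]
        rw [Finset.sum_comm]
        refine Finset.sum_congr rfl fun i _ => Finset.sum_congr rfl fun j _ => ?_
        rfl
    _ = ∑ i, ((l i : ℤ) - (m i : ℤ)).natAbs := by
        refine Finset.sum_congr rfl fun i _ => ?_
        rw [cardA n _ _ (hlle i) (hmle i)]
end

section
/- For the difference matrix Z_n of partitions of n, conjugation λ ↦ λ' induces a permutation of the index set fixing Z_n (i.e., z_{λ',μ'} = z_{λ,μ} for all λ, μ); consequently, if the largest eigenvalue of Z_n is simple with positive eigenvector w = (w_λ), then w_{λ'} = w_λ for every partition λ of n. -/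
/-- The type of partitions of `n`, identified with weakly decreasing sequences
of nonnegative integers of length `n` (padded with zeros) summing to `n`. -/
def PartVec (n : ℕ) : Type :=
  {l : Fin n → ℕ // Antitone l ∧ ∑ i, l i = n}

theorem PartVec.le (n : ℕ) (p : PartVec n) (i : Fin n) : p.1 i ≤ n := by
  have h := Finset.single_le_sum (f := p.1) (fun j _ => Nat.zero_le (p.1 j))
    (Finset.mem_univ i)
  rw [p.2.2] at h; exact h

noncomputable instance (n : ℕ) : Fintype (PartVec n) :=
  Fintype.ofInjective
    (fun p : PartVec n => fun i : Fin n =>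
      (⟨p.1 i, Nat.lt_succ_of_le (PartVec.le n p i)⟩ : Fin (n + 1)))
    (fun p q h => Subtype.ext (funext fun i => congrArg Fin.val (congrFun h i)))

instance (n : ℕ) : DecidableEq (PartVec n) := fun p q =>
  decidable_of_iff (p.1 = q.1) Subtype.ext_iff.symm
/-- The conjugate (transpose) partition of a partition of `n`:
`λ'_i = #{j : λ_j ≥ i}` (with `0`-based indexing, the entry at `i : Fin n` is
`#{j : λ_j ≥ i + 1}`). -/
def PartVec.conj {n : ℕ} (p : PartVec n) : PartVec n :=
  ⟨fun i => (Finset.univ.filter (fun j => i.val + 1 ≤ p.1 j)).card, by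
    constructor
    · intro i j hij
      apply Finset.card_le_card
      intro k hk
      simp only [Finset.mem_filter, Finset.mem_univ, true_and] at hk ⊢
      have : (i : ℕ) ≤ (j : ℕ) := hij
      omega
    · have hle : ∀ j, p.1 j ≤ n := PartVec.le n p
      calc ∑ i : Fin n, (Finset.univ.filter (fun j => i.val + 1 ≤ p.1 j)).card
          = ∑ i : Fin n, ∑ j : Fin n, if i.val + 1 ≤ p.1 j then 1 else 0 := by
            refine Finset.sum_congr rfl fun i _ => ?_
            rw [Finset.card_filter]
        _ = ∑ j : Fin n, ∑ i : Fin n, if i.val + 1 ≤ p.1 j then 1 else 0 :=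
            Finset.sum_comm
        _ = ∑ j : Fin n, p.1 j := by
            refine Finset.sum_congr rfl fun j _ => ?_
            rw [Fin.sum_univ_eq_sum_range (fun i => if i + 1 ≤ p.1 j then 1 else 0)]
            rw [← Finset.card_filter]
            have : (Finset.range n).filter (fun i => i + 1 ≤ p.1 j) =
                Finset.range (p.1 j) := by
              ext a
              simp only [Finset.mem_filter, Finset.mem_range]
              have := hle j
              omega
            rw [this, Finset.card_range]
        _ = n := p.2.2⟩

lemma card_filter_lt_val {n : ℕ} (a : ℕ) (_ha : a ≤ n) :
    (Finset.univ.filter (fun j : Fin n => j.val < a)).card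
      = min a n := by
  rw [Finset.card_filter]
  rw [Fin.sum_univ_eq_sum_range (fun j => if j < a then 1 else 0)]
  rw [← Finset.card_filter]
  have : (Finset.range n).filter (fun j => j < a) = Finset.range (min a n) := by
    ext k; simp only [Finset.mem_filter, Finset.mem_range]; omega
  rw [this, Finset.card_range]

lemma mem_conj_iff {n : ℕ} (p : PartVec n) (i k : Fin n) :
    k.val < p.conj.1 i ↔ i.val + 1 ≤ p.1 k := by
  have hdef : p.conj.1 i
      = (Finset.univ.filter (fun j : Fin n => i.val + 1 ≤ p.1 j)).card := rfl
  constructor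
  · intro h
    by_contra hc
    have hsub : (Finset.univ.filter (fun j : Fin n => i.val + 1 ≤ p.1 j))
        ⊆ Finset.univ.filter (fun j : Fin n => j.val < k.val) := by
      intro j hj
      simp only [Finset.mem_filter, Finset.mem_univ, true_and] at hj ⊢
      by_contra hjk
      have : k ≤ j := by
        have : k.val ≤ j.val := by omega
        exact this
      have := p.2.1 this
      omega
    have hcard := Finset.card_le_card hsub
    rw [card_filter_lt_val k.val (le_of_lt k.2)] at hcard
    have := k.2
    omega
  · intro h
    have hsub : (Finset.univ.filter (fun j : Fin n => j.val < k.val + 1))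
        ⊆ Finset.univ.filter (fun j : Fin n => i.val + 1 ≤ p.1 j) := by
      intro j hj
      simp only [Finset.mem_filter, Finset.mem_univ, true_and] at hj ⊢
      have hjk : j ≤ k := by
        have : j.val ≤ k.val := by omega
        exact this
      have := p.2.1 hjk
      omega
    have hcard := Finset.card_le_card hsub
    rw [card_filter_lt_val (k.val + 1) k.2] at hcard
    have := k.2
    omega

lemma PartVec.conj_conj {n : ℕ} (p : PartVec n) : p.conj.conj = p := by
  apply Subtype.ext; funext i
  have h1 : ∀ j : Fin n, j.val < p.conj.conj.1 i ↔ j.val < p.1 i := by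
    intro j
    rw [mem_conj_iff p.conj i j]
    have h2 := mem_conj_iff p j i
    omega
  have hA := PartVec.le n p.conj.conj i
  have hB := PartVec.le n p i
  by_contra hne
  rcases Nat.lt_or_ge (p.conj.conj.1 i) (p.1 i) with h | h
  · have := (h1 ⟨p.conj.conj.1 i, by omega⟩).mpr h
    simp at this
  · have hlt : p.1 i < p.conj.conj.1 i := by omega
    have := (h1 ⟨p.1 i, by omega⟩).mp hlt
    simp at this

lemma natAbs_eq_sum {n a b : ℕ} (ha : a ≤ n) (hb : b ≤ n) :
    ((a : ℤ) - b).natAbs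
      = ∑ i : Fin n, (if (i.val < a) ↔ (i.val < b) then 0 else 1) := by
  rw [Fin.sum_univ_eq_sum_range (fun i => if (i < a) ↔ (i < b) then 0 else 1)]
  have h1 : (∑ i ∈ Finset.range n, if (i < a) ↔ (i < b) then 0 else 1)
      = ((Finset.range n).filter (fun i => ¬((i < a) ↔ (i < b)))).card := by
    rw [Finset.card_filter]
    refine Finset.sum_congr rfl fun i _ => ?_
    by_cases h : (i < a) ↔ (i < b) <;> simp [h]
  rw [h1]
  have h2 : (Finset.range n).filter (fun i => ¬((i < a) ↔ (i < b)))
      = Finset.Ico (min a b) (max a b) := by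
    ext i
    simp only [Finset.mem_filter, Finset.mem_range, Finset.mem_Ico]
    omega
  rw [h2, Nat.card_Ico]
  omega

lemma l1Dist_conj {n : ℕ} (p q : PartVec n) :
    l1Dist p.conj.1 q.conj.1 = l1Dist p.1 q.1 := by
  unfold l1Dist
  have lhs : ∀ i : Fin n, ((p.conj.1 i : ℤ) - q.conj.1 i).natAbs
      = ∑ j : Fin n, (if (i.val + 1 ≤ p.1 j) ↔ (i.val + 1 ≤ q.1 j) then 0 else 1) := by
    intro i
    rw [natAbs_eq_sum (PartVec.le n p.conj i) (PartVec.le n q.conj i)]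
    refine Finset.sum_congr rfl fun j _ => ?_
    simp only [mem_conj_iff]
  have rhs : ∀ j : Fin n, ((p.1 j : ℤ) - q.1 j).natAbs
      = ∑ i : Fin n, (if (i.val + 1 ≤ p.1 j) ↔ (i.val + 1 ≤ q.1 j) then 0 else 1) := by
    intro j
    rw [natAbs_eq_sum (PartVec.le n p j) (PartVec.le n q j)]
    refine Finset.sum_congr rfl fun i _ => ?_
    simp only [Nat.lt_iff_add_one_le]
  calc ∑ i : Fin n, ((p.conj.1 i : ℤ) - q.conj.1 i).natAbs
      = ∑ i : Fin n, ∑ j : Fin n,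
          (if (i.val + 1 ≤ p.1 j) ↔ (i.val + 1 ≤ q.1 j) then 0 else 1) :=
        Finset.sum_congr rfl fun i _ => lhs i
    _ = ∑ j : Fin n, ∑ i : Fin n,
          (if (i.val + 1 ≤ p.1 j) ↔ (i.val + 1 ≤ q.1 j) then 0 else 1) :=
        Finset.sum_comm
    _ = ∑ j : Fin n, ((p.1 j : ℤ) - q.1 j).natAbs :=
        Finset.sum_congr rfl fun j _ => (rhs j).symm

/-- Conjugation `λ ↦ λ'` induces a permutation of the set of partitions of `n`
fixing the difference matrix `Z_n` (i.e. `z_{λ',μ'} = z_{λ,μ}`); consequently,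
if the largest eigenvalue of `Z_n` is simple with a positive eigenvector
`w = (w_λ)`, then `w_{λ'} = w_λ` for every partition `λ` of `n`. -/
theorem difference_matrix_conj_invariance (n : ℕ)
    (Z : Matrix (PartVec n) (PartVec n) ℝ)
    (hZ : ∀ p q : PartVec n, Z p q = (l1Dist p.1 q.1 : ℝ)) :
    (∀ p q : PartVec n, Z p.conj q.conj = Z p q) ∧
    (∀ t : ℝ, ∀ w : PartVec n → ℝ,
      t ∈ spectrum ℝ Z → (∀ s ∈ spectrum ℝ Z, s ≤ t) →
      Module.finrank ℝ (Module.End.eigenspace (Matrix.toLin' Z) t) = 1 →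
      Z.mulVec w = t • w → (∀ p, 0 < w p) →
      ∀ p : PartVec n, w p.conj = w p) := by
  have hconjZ : ∀ p q : PartVec n, Z p.conj q.conj = Z p q := by
    intro p q; rw [hZ, hZ, l1Dist_conj]
  refine ⟨hconjZ, ?_⟩
  intro t w _ _ hrank heig hpos
  have hinv : Function.Involutive (PartVec.conj (n := n)) := PartVec.conj_conj
  set e : Equiv.Perm (PartVec n) := hinv.toPerm _ with he
  set w' : PartVec n → ℝ := fun p => w p.conj with hw'
  have hmv : ∀ v : PartVec n → ℝ, ∀ r, Z.mulVec v r = ∑ q, Z r q * v q := by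
    intro v r; rfl
  have heig' : Z.mulVec w' = t • w' := by
    funext p0
    have step1 : Z.mulVec w' p0 = ∑ q : PartVec n, Z p0 q.conj * w q.conj.conj := by
      rw [hmv]
      exact (Fintype.sum_equiv e (fun q : PartVec n => Z p0 q.conj * w q.conj.conj)
        (fun q : PartVec n => Z p0 q * w q.conj) (fun x => rfl)).symm
    rw [step1]
    have step2 : ∀ q : PartVec n, Z p0 q.conj * w q.conj.conj
        = Z p0.conj q * w q := by
      intro q
      rw [hinv q]
      congr 1
      calc Z p0 q.conj = Z p0.conj.conj q.conj := by rw [hinv p0]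
        _ = Z p0.conj q := hconjZ p0.conj q
    rw [Finset.sum_congr rfl (fun q _ => step2 q), ← hmv, heig]
    rfl
  have hwE : w ∈ Module.End.eigenspace (Matrix.toLin' Z) t := by
    rw [Module.End.mem_eigenspace_iff, Matrix.toLin'_apply]; exact heig
  have hw'E : w' ∈ Module.End.eigenspace (Matrix.toLin' Z) t := by
    rw [Module.End.mem_eigenspace_iff, Matrix.toLin'_apply]; exact heig'
  intro p
  have hw0 : w ≠ 0 := by
    intro h
    have := hpos p
    rw [h] at this
    simp at this
  have hne : (⟨w, hwE⟩ : Module.End.eigenspace (Matrix.toLin' Z) t) ≠ 0 := by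
    intro h
    exact hw0 (congrArg Subtype.val h)
  have hspan := (finrank_eq_one_iff_of_nonzero
    (⟨w, hwE⟩ : Module.End.eigenspace (Matrix.toLin' Z) t) hne).mp hrank
  have hmem : (⟨w', hw'E⟩ : Module.End.eigenspace (Matrix.toLin' Z) t)
      ∈ Submodule.span ℝ {(⟨w, hwE⟩ : Module.End.eigenspace (Matrix.toLin' Z) t)} := by
    rw [hspan]; trivial
  obtain ⟨c, hc⟩ := Submodule.mem_span_singleton.mp hmem
  have hcw : c • w = w' := congrArg Subtype.val hc
  have h1 : c * w p = w p.conj := congrFun hcw p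
  have h2 : c * w p.conj = w p := by
    have := congrFun hcw p.conj
    simpa [hw', hinv p] using this
  have key : w p.conj * w p.conj = w p * w p := by
    calc w p.conj * w p.conj = (c * w p) * w p.conj := by rw [h1]
      _ = w p * (c * w p.conj) := by ring
      _ = w p * w p := by rw [h2]
  nlinarith [hpos p, hpos p.conj, key]
end
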